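/- Under the hypotheses of the main recovery theorem (joint RIP with σ_{2K} < 0.1907, ‖Φᵀw‖_{∞,1} ≤ λ/2, T the set of the K largest joint magnitudes of x, T₀₁ = T ∪ T₁ with T₁ the K largest joint magnitudes of h_{Tᶜ}), the error h = x̂ - x satisfies ‖h_{T₀₁}‖₂ ≤ (√K λ c₀ + √2 K^{-1/2} σ_{2K} ‖h_{Tᶜ}‖_{2,1}) / (1 - σ_{2K}), where c₀ = 3√2/2. -/
import Mathlib


open scoped BigOperators
open Finset

/-- Euclidean norm of a finite-dimensional real vector. -/
noncomputable def l2 {ι : Type*} [Fintype ι] (x : ι → ℝ) : ℝ :=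
  Real.sqrt (∑ j, x j ^ 2)

/-- Euclidean inner product. -/
noncomputable def dot {ι : Type*} [Fintype ι] (x y : ι → ℝ) : ℝ := ∑ j, x j * y j

/-- Joint magnitude of the `i`-th pair of a vector in `ℝ^{2N}`. -/
noncomputable def jmag {N : ℕ} (x : Fin N ⊕ Fin N → ℝ) (i : Fin N) : ℝ :=
  Real.sqrt (x (Sum.inl i) ^ 2 + x (Sum.inr i) ^ 2)

/-- Mixed ℓ₂/ℓ₁ norm `‖x‖_{2,1}`. -/
noncomputable def n21 {N : ℕ} (x : Fin N ⊕ Fin N → ℝ) : ℝ := ∑ i, jmag x i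

/-- Mixed ℓ_∞/ℓ₁ norm `‖x‖_{∞,1}`. -/
noncomputable def ninf1 {N : ℕ} (x : Fin N ⊕ Fin N → ℝ) : ℝ := ⨆ i, jmag x i

open Classical in
/-- Joint support of a vector in `ℝ^{2N}`. -/
noncomputable def jsupp {N : ℕ} (x : Fin N ⊕ Fin N → ℝ) : Finset (Fin N) :=
  Finset.univ.filter (fun i => x (Sum.inl i) ≠ 0 ∨ x (Sum.inr i) ≠ 0)

/-- Restriction of `x` to the joint-index set `T` (zeroing other pairs). -/
noncomputable def rT {N : ℕ} (T : Finset (Fin N)) (x : Fin N ⊕ Fin N → ℝ) :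
    Fin N ⊕ Fin N → ℝ := fun j => if Sum.elim id id j ∈ T then x j else 0

/-- Joint restricted isometry property with sparsity level `S` and constant `σ`. -/
def JRIP {M N : ℕ} (Φ : Matrix (Fin M) (Fin N ⊕ Fin N) ℝ) (S : ℕ) (σ : ℝ) : Prop :=
  ∀ v : Fin N ⊕ Fin N → ℝ, (jsupp v).card ≤ S →
    (1 - σ) * l2 v ^ 2 ≤ l2 (Φ.mulVec v) ^ 2 ∧ l2 (Φ.mulVec v) ^ 2 ≤ (1 + σ) * l2 v ^ 2

-- basic l2 / dot lemmas
lemma l2_nonneg {ι : Type*} [Fintype ι] (v : ι → ℝ) : 0 ≤ l2 v := Real.sqrt_nonneg _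
lemma l2_sq {ι : Type*} [Fintype ι] (v : ι → ℝ) : l2 v ^ 2 = ∑ j, v j ^ 2 :=
  Real.sq_sqrt (Finset.sum_nonneg fun j _ => sq_nonneg _)
lemma dot_self {ι : Type*} [Fintype ι] (v : ι → ℝ) : dot v v = l2 v ^ 2 := by
  rw [l2_sq]; simp [dot, sq]
lemma l2_eq_zero {ι : Type*} [Fintype ι] {v : ι → ℝ} (h : l2 v = 0) : v = 0 := by
  have h2 : (∑ j, v j ^ 2) = 0 := by
    have := congrArg (fun t => t ^ 2) h
    simpa [l2_sq] using (l2_sq v).symm.trans (by rw [h]; norm_num)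
  funext j
  have := (Finset.sum_eq_zero_iff_of_nonneg (fun j _ => sq_nonneg (v j))).1 h2 j (Finset.mem_univ j)
  exact pow_eq_zero_iff (by norm_num) |>.1 this
lemma dot_comm {ι : Type*} [Fintype ι] (u v : ι → ℝ) : dot u v = dot v u := by
  simp [dot, mul_comm]
lemma dot_add_left {ι : Type*} [Fintype ι] (u v w : ι → ℝ) :
    dot (u + v) w = dot u w + dot v w := by
  simp [dot, add_mul, Finset.sum_add_distrib]
lemma dot_add_right {ι : Type*} [Fintype ι] (u v w : ι → ℝ) :
    dot u (v + w) = dot u v + dot u w := by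
  simp [dot, mul_add, Finset.sum_add_distrib]
lemma dot_smul_left {ι : Type*} [Fintype ι] (c : ℝ) (u v : ι → ℝ) :
    dot (c • u) v = c * dot u v := by
  simp [dot, Finset.mul_sum, mul_assoc]
lemma dot_smul_right {ι : Type*} [Fintype ι] (c : ℝ) (u v : ι → ℝ) :
    dot u (c • v) = c * dot u v := by
  simp [dot, Finset.mul_sum]; ring_nf
  exact Finset.sum_congr rfl fun j _ => by ring
lemma dot_neg_right {ι : Type*} [Fintype ι] (u v : ι → ℝ) : dot u (-v) = -dot u v := by
  simp [dot]
lemma l2_smul {ι : Type*} [Fintype ι] (c : ℝ) (v : ι → ℝ) : l2 (c • v) = |c| * l2 v := by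
  unfold l2
  rw [show (∑ j, (c • v) j ^ 2) = c ^ 2 * ∑ j, v j ^ 2 by simp [Finset.mul_sum, mul_pow], Real.sqrt_mul (sq_nonneg c), Real.sqrt_sq_eq_abs]
lemma dot_mulVec_adj {M : ℕ} {ι : Type*} [Fintype ι] (Φ : Matrix (Fin M) ι ℝ)
    (u : ι → ℝ) (z : Fin M → ℝ) : dot (Φ.mulVec u) z = dot u (Φ.transpose.mulVec z) := by
  simp only [dot, Matrix.mulVec, dotProduct, Matrix.transpose_apply, Finset.sum_mul,
    Finset.mul_sum]
  rw [Finset.sum_comm]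
  exact Finset.sum_congr rfl fun j _ => Finset.sum_congr rfl fun m _ => by ring

-- jmag lemmas
lemma jmag_nonneg {N : ℕ} (v : Fin N ⊕ Fin N → ℝ) (i : Fin N) : 0 ≤ jmag v i :=
  Real.sqrt_nonneg _
lemma jmag_sq {N : ℕ} (v : Fin N ⊕ Fin N → ℝ) (i : Fin N) :
    jmag v i ^ 2 = v (Sum.inl i) ^ 2 + v (Sum.inr i) ^ 2 :=
  Real.sq_sqrt (by positivity)
lemma pair_cauchy {N : ℕ} (u v : Fin N ⊕ Fin N → ℝ) (i : Fin N) :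
    u (Sum.inl i) * v (Sum.inl i) + u (Sum.inr i) * v (Sum.inr i) ≤ jmag u i * jmag v i := by
  have h1 := jmag_sq u i; have h2 := jmag_sq v i
  have h3 := jmag_nonneg u i; have h4 := jmag_nonneg v i
  nlinarith [sq_nonneg (u (Sum.inl i) * v (Sum.inr i) - u (Sum.inr i) * v (Sum.inl i)),
    sq_nonneg (jmag u i * jmag v i - u (Sum.inl i) * v (Sum.inl i) - u (Sum.inr i) * v (Sum.inr i)),
    mul_nonneg h3 h4]
lemma jmag_add_le {N : ℕ} (u v : Fin N ⊕ Fin N → ℝ) (i : Fin N) :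
    jmag (u + v) i ≤ jmag u i + jmag v i := by
  have h1 := jmag_sq u i; have h2 := jmag_sq v i
  have h3 := jmag_nonneg u i; have h4 := jmag_nonneg v i
  have hc := pair_cauchy u v i
  have : jmag (u + v) i ^ 2 ≤ (jmag u i + jmag v i) ^ 2 := by
    rw [jmag_sq]; simp only [Pi.add_apply]; nlinarith
  calc jmag (u + v) i = Real.sqrt (jmag (u + v) i ^ 2) :=
        (Real.sqrt_sq (jmag_nonneg _ _)).symm
    _ ≤ Real.sqrt ((jmag u i + jmag v i) ^ 2) := Real.sqrt_le_sqrt this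
    _ = jmag u i + jmag v i := Real.sqrt_sq (by positivity)
lemma jmag_smul {N : ℕ} (c : ℝ) (v : Fin N ⊕ Fin N → ℝ) (i : Fin N) :
    jmag (c • v) i = |c| * jmag v i := by
  unfold jmag
  rw [show (c • v) (Sum.inl i) ^ 2 + (c • v) (Sum.inr i) ^ 2
      = c ^ 2 * (v (Sum.inl i) ^ 2 + v (Sum.inr i) ^ 2) by simp [mul_pow]; ring,
    Real.sqrt_mul (sq_nonneg c), Real.sqrt_sq_eq_abs]

-- rT lemmas
lemma rT_inl {N : ℕ} (S : Finset (Fin N)) (v : Fin N ⊕ Fin N → ℝ) (i : Fin N) :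
    rT S v (Sum.inl i) = if i ∈ S then v (Sum.inl i) else 0 := rfl
lemma rT_inr {N : ℕ} (S : Finset (Fin N)) (v : Fin N ⊕ Fin N → ℝ) (i : Fin N) :
    rT S v (Sum.inr i) = if i ∈ S then v (Sum.inr i) else 0 := rfl
lemma jmag_rT {N : ℕ} (S : Finset (Fin N)) (v : Fin N ⊕ Fin N → ℝ) (i : Fin N) :
    jmag (rT S v) i = if i ∈ S then jmag v i else 0 := by
  unfold jmag; rw [rT_inl, rT_inr]
  by_cases h : i ∈ S <;> simp [h]
lemma n21_rT {N : ℕ} (S : Finset (Fin N)) (v : Fin N ⊕ Fin N → ℝ) :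
    n21 (rT S v) = ∑ i ∈ S, jmag v i := by
  unfold n21
  rw [Finset.sum_congr rfl fun i _ => jmag_rT S v i, Finset.sum_ite_mem, Finset.univ_inter]
lemma l2_rT_sq {N : ℕ} (S : Finset (Fin N)) (v : Fin N ⊕ Fin N → ℝ) :
    l2 (rT S v) ^ 2 = ∑ i ∈ S, jmag v i ^ 2 := by
  rw [l2_sq, Fintype.sum_sum_type]
  rw [← Finset.sum_add_distrib]
  have : ∀ i : Fin N, rT S v (Sum.inl i) ^ 2 + rT S v (Sum.inr i) ^ 2
      = if i ∈ S then jmag v i ^ 2 else 0 := by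
    intro i; rw [rT_inl, rT_inr, jmag_sq]; by_cases h : i ∈ S <;> simp [h]
  rw [Finset.sum_congr rfl fun i _ => this i, Finset.sum_ite_mem, Finset.univ_inter]
lemma jsupp_rT {N : ℕ} (S : Finset (Fin N)) (v : Fin N ⊕ Fin N → ℝ) :
    jsupp (rT S v) ⊆ S := by
  intro i hi
  simp only [jsupp, Finset.mem_filter] at hi
  rcases hi.2 with h | h
  · rw [rT_inl] at h; by_contra hS; simp [hS] at h
  · rw [rT_inr] at h; by_contra hS; simp [hS] at h
lemma notMem_jsupp {N : ℕ} {v : Fin N ⊕ Fin N → ℝ} {i : Fin N} (h : i ∉ jsupp v) :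
    v (Sum.inl i) = 0 ∧ v (Sum.inr i) = 0 := by
  simp only [jsupp, Finset.mem_filter, Finset.mem_univ, true_and] at h
  push_neg at h; exact h
lemma rT_union {N : ℕ} (A B : Finset (Fin N)) (hd : Disjoint A B) (v : Fin N ⊕ Fin N → ℝ) :
    rT (A ∪ B) v = rT A v + rT B v := by
  funext j
  simp only [rT, Pi.add_apply, Finset.mem_union]
  by_cases hA : Sum.elim id id j ∈ A
  · have hB : Sum.elim id id j ∉ B := Finset.disjoint_left.1 hd hA
    simp [hA, hB]
  · by_cases hB : Sum.elim id id j ∈ B <;> simp [hA, hB]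
lemma rT_compl_add {N : ℕ} (S : Finset (Fin N)) (v : Fin N ⊕ Fin N → ℝ) :
    rT S v + rT Sᶜ v = v := by
  funext j
  simp only [rT, Pi.add_apply, Finset.mem_compl]
  by_cases h : Sum.elim id id j ∈ S <;> simp [h]

lemma dot_sub_left {ι : Type*} [Fintype ι] (u v w : ι → ℝ) :
    dot (u - v) w = dot u w - dot v w := by
  simp [dot, sub_mul, Finset.sum_sub_distrib]
lemma dot_sub_right {ι : Type*} [Fintype ι] (u v w : ι → ℝ) :
    dot u (v - w) = dot u v - dot u w := by
  simp [dot, mul_sub, Finset.sum_sub_distrib]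
lemma jsupp_add_subset {N : ℕ} (u v : Fin N ⊕ Fin N → ℝ) :
    jsupp (u + v) ⊆ jsupp u ∪ jsupp v := by
  intro i hi
  by_contra hc
  simp only [Finset.mem_union, not_or] at hc
  obtain ⟨h1, h2⟩ := hc
  obtain ⟨a1, a2⟩ := notMem_jsupp h1
  obtain ⟨b1, b2⟩ := notMem_jsupp h2
  simp only [jsupp, Finset.mem_filter, Pi.add_apply, a1, a2, b1, b2] at hi
  simp at hi
lemma jsupp_sub_subset {N : ℕ} (u v : Fin N ⊕ Fin N → ℝ) :
    jsupp (u - v) ⊆ jsupp u ∪ jsupp v := by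
  intro i hi
  by_contra hc
  simp only [Finset.mem_union, not_or] at hc
  obtain ⟨h1, h2⟩ := hc
  obtain ⟨a1, a2⟩ := notMem_jsupp h1
  obtain ⟨b1, b2⟩ := notMem_jsupp h2
  simp only [jsupp, Finset.mem_filter, Pi.sub_apply, a1, a2, b1, b2] at hi
  simp at hi
lemma jsupp_smul_subset {N : ℕ} (c : ℝ) (v : Fin N ⊕ Fin N → ℝ) :
    jsupp (c • v) ⊆ jsupp v := by
  intro i hi
  simp only [jsupp, Finset.mem_filter, Pi.smul_apply, smul_eq_mul, Finset.mem_univ,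
    true_and] at hi ⊢
  rcases hi with h | h
  · exact Or.inl fun h0 => h (by rw [h0, mul_zero])
  · exact Or.inr fun h0 => h (by rw [h0, mul_zero])
lemma jsupp_neg {N : ℕ} (v : Fin N ⊕ Fin N → ℝ) : jsupp (-v) = jsupp v := by
  ext i; simp [jsupp]
lemma dot_zero_of_disjoint {N : ℕ} {u v : Fin N ⊕ Fin N → ℝ}
    (hd : Disjoint (jsupp u) (jsupp v)) : dot u v = 0 := by
  apply Finset.sum_eq_zero
  intro j _
  have key : ∀ i : Fin N, u (Sum.inl i) * v (Sum.inl i) = 0 ∧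
      u (Sum.inr i) * v (Sum.inr i) = 0 := by
    intro i
    by_cases hi : i ∈ jsupp u
    · have := notMem_jsupp (Finset.disjoint_left.1 hd hi)
      constructor <;> simp [this.1, this.2]
    · have := notMem_jsupp hi
      constructor <;> simp [this.1, this.2]
  cases j with
  | inl i => exact (key i).1
  | inr i => exact (key i).2

lemma pol0 {M N K : ℕ} {Φ : Matrix (Fin M) (Fin N ⊕ Fin N) ℝ} {σ : ℝ}
    (hRIP : JRIP Φ (2 * K) σ) {u v : Fin N ⊕ Fin N → ℝ}
    (h1 : (jsupp (u + v)).card ≤ 2 * K) (h2 : (jsupp (u - v)).card ≤ 2 * K)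
    (h0 : dot u v = 0) :
    dot (Φ.mulVec u) (Φ.mulVec v) ≤ σ * (l2 u ^ 2 + l2 v ^ 2) / 2 := by
  have ha := (hRIP (u + v) h1).2
  have hb := (hRIP (u - v) h2).1
  have e1 : l2 (Φ.mulVec (u + v)) ^ 2 = dot (Φ.mulVec u) (Φ.mulVec u)
      + 2 * dot (Φ.mulVec u) (Φ.mulVec v) + dot (Φ.mulVec v) (Φ.mulVec v) := by
    rw [← dot_self, Matrix.mulVec_add, dot_add_left, dot_add_right, dot_add_right,
      dot_comm (Φ.mulVec v) (Φ.mulVec u)]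
    ring
  have e2 : l2 (Φ.mulVec (u - v)) ^ 2 = dot (Φ.mulVec u) (Φ.mulVec u)
      - 2 * dot (Φ.mulVec u) (Φ.mulVec v) + dot (Φ.mulVec v) (Φ.mulVec v) := by
    rw [← dot_self, Matrix.mulVec_sub, dot_sub_left, dot_sub_right, dot_sub_right,
      dot_comm (Φ.mulVec v) (Φ.mulVec u)]
    ring
  have f1 : l2 (u + v) ^ 2 = l2 u ^ 2 + l2 v ^ 2 := by
    rw [← dot_self, ← dot_self, ← dot_self, dot_add_left, dot_add_right, dot_add_right,
      dot_comm v u, h0]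
    ring
  have f2 : l2 (u - v) ^ 2 = l2 u ^ 2 + l2 v ^ 2 := by
    rw [← dot_self, ← dot_self, ← dot_self, dot_sub_left, dot_sub_right, dot_sub_right,
      dot_comm v u, h0]
    ring
  rw [e1, f1] at ha
  rw [e2, f2] at hb
  linarith

lemma pol {M N K : ℕ} {Φ : Matrix (Fin M) (Fin N ⊕ Fin N) ℝ} {σ : ℝ} (hσ0 : 0 ≤ σ)
    (hRIP : JRIP Φ (2 * K) σ) {u v : Fin N ⊕ Fin N → ℝ}
    (hd : Disjoint (jsupp u) (jsupp v))
    (hcard : (jsupp u).card + (jsupp v).card ≤ 2 * K) :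
    dot (Φ.mulVec u) (Φ.mulVec v) ≤ σ * l2 u * l2 v := by
  by_cases hu : l2 u = 0
  · rw [l2_eq_zero hu]
    simp only [Matrix.mulVec_zero]
    have : dot (0 : Fin M → ℝ) (Φ.mulVec v) = 0 := by simp [dot]
    rw [this]
    exact mul_nonneg (mul_nonneg hσ0 (l2_nonneg _)) (l2_nonneg _)
  by_cases hv : l2 v = 0
  · rw [l2_eq_zero hv]
    simp only [Matrix.mulVec_zero]
    have : dot (Φ.mulVec u) (0 : Fin M → ℝ) = 0 := by simp [dot]
    rw [this]
    exact mul_nonneg (mul_nonneg hσ0 (l2_nonneg _)) (l2_nonneg _)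
  have hu' : 0 < l2 u := lt_of_le_of_ne (l2_nonneg u) (Ne.symm hu)
  have hv' : 0 < l2 v := lt_of_le_of_ne (l2_nonneg v) (Ne.symm hv)
  set t : ℝ := Real.sqrt (l2 v / l2 u) with ht_def
  have ht : 0 < t := Real.sqrt_pos.2 (div_pos hv' hu')
  have ht2 : t ^ 2 = l2 v / l2 u := Real.sq_sqrt (le_of_lt (div_pos hv' hu'))
  have hcard' : ∀ a b : ℝ, (jsupp (a • u + b • v)).card ≤ 2 * K := by
    intro a b
    calc (jsupp (a • u + b • v)).card ≤ ((jsupp (a • u)) ∪ (jsupp (b • v))).card :=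
          Finset.card_le_card (jsupp_add_subset _ _)
      _ ≤ ((jsupp u) ∪ (jsupp v)).card := Finset.card_le_card
          (Finset.union_subset_union (jsupp_smul_subset _ _) (jsupp_smul_subset _ _))
      _ ≤ (jsupp u).card + (jsupp v).card := Finset.card_union_le _ _
      _ ≤ 2 * K := hcard
  have hcard'' : ∀ a b : ℝ, (jsupp (a • u - b • v)).card ≤ 2 * K := by
    intro a b
    calc (jsupp (a • u - b • v)).card ≤ ((jsupp (a • u)) ∪ (jsupp (b • v))).card :=
          Finset.card_le_card (jsupp_sub_subset _ _)
      _ ≤ ((jsupp u) ∪ (jsupp v)).card := Finset.card_le_card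
          (Finset.union_subset_union (jsupp_smul_subset _ _) (jsupp_smul_subset _ _))
      _ ≤ (jsupp u).card + (jsupp v).card := Finset.card_union_le _ _
      _ ≤ 2 * K := hcard
  have h0 : dot (t • u) (t⁻¹ • v) = 0 := by
    rw [dot_smul_left, dot_smul_right, dot_zero_of_disjoint hd]
    ring
  have key := pol0 hRIP (hcard' t t⁻¹) (hcard'' t t⁻¹) h0
  rw [Matrix.mulVec_smul, Matrix.mulVec_smul, dot_smul_left, dot_smul_right] at key
  have htt : t * (t⁻¹ * dot (Φ.mulVec u) (Φ.mulVec v)) = dot (Φ.mulVec u) (Φ.mulVec v) := by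
    field_simp
  rw [htt] at key
  have l1 : l2 (t • u) = t * l2 u := by rw [l2_smul, abs_of_pos ht]
  have l2' : l2 (t⁻¹ • v) = t⁻¹ * l2 v := by
    rw [l2_smul, abs_of_pos (inv_pos.2 ht)]
  rw [l1, l2'] at key
  have expand : σ * ((t * l2 u) ^ 2 + (t⁻¹ * l2 v) ^ 2) / 2 = σ * l2 u * l2 v := by
    have ht2' : t ^ 2 * l2 u = l2 v := by
      rw [ht2]; field_simp
    have htinv : (t⁻¹) ^ 2 * l2 v = l2 u := by
      rw [inv_pow, ht2]
      field_simp
    calc σ * ((t * l2 u) ^ 2 + (t⁻¹ * l2 v) ^ 2) / 2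
        = σ * ((t ^ 2 * l2 u) * l2 u + ((t⁻¹) ^ 2 * l2 v) * l2 v) / 2 := by ring
      _ = σ * (l2 v * l2 u + l2 u * l2 v) / 2 := by rw [ht2', htinv]
      _ = σ * l2 u * l2 v := by ring
  linarith [key, expand.symm.le]

lemma polAbs {M N K : ℕ} {Φ : Matrix (Fin M) (Fin N ⊕ Fin N) ℝ} {σ : ℝ} (hσ0 : 0 ≤ σ)
    (hRIP : JRIP Φ (2 * K) σ) {u v : Fin N ⊕ Fin N → ℝ}
    (hd : Disjoint (jsupp u) (jsupp v))
    (hcard : (jsupp u).card + (jsupp v).card ≤ 2 * K) :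
    |dot (Φ.mulVec u) (Φ.mulVec v)| ≤ σ * l2 u * l2 v := by
  have h1 := pol hσ0 hRIP hd hcard
  have hd' : Disjoint (jsupp u) (jsupp (-v)) := by rw [jsupp_neg]; exact hd
  have hcard2 : (jsupp u).card + (jsupp (-v)).card ≤ 2 * K := by rw [jsupp_neg]; exact hcard
  have h2 := pol hσ0 hRIP hd' hcard2
  rw [Matrix.mulVec_neg, dot_neg_right] at h2
  have hl2 : l2 (-v) = l2 v := by simp [l2]
  rw [hl2] at h2
  exact abs_le.2 ⟨by linarith, h1⟩

lemma topk {N : ℕ} (g : Fin N → ℝ) :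
    ∀ (k : ℕ) (S : Finset (Fin N)), ∃ B ⊆ S, B.card = min k S.card ∧
      ∀ a ∈ S \ B, ∀ b ∈ B, g a ≤ g b := by
  intro k
  induction k with
  | zero => intro S; exact ⟨∅, Finset.empty_subset _, by simp, by simp⟩
  | succ k ih =>
    intro S
    rcases S.eq_empty_or_nonempty with hS | hS
    · exact ⟨∅, Finset.empty_subset _, by simp [hS], by simp⟩
    · obtain ⟨m, hm, hmax⟩ := S.exists_max_image g hS
      obtain ⟨B', hB'sub, hB'card, hB'max⟩ := ih (S.erase m)
      have hmB' : m ∉ B' := fun h => (Finset.mem_erase.1 (hB'sub h)).1 rfl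
      refine ⟨insert m B', ?_, ?_, ?_⟩
      · exact Finset.insert_subset hm (hB'sub.trans (S.erase_subset m))
      · rw [Finset.card_insert_of_notMem hmB', hB'card,
          Finset.card_erase_of_mem hm]
        have : 1 ≤ S.card := Finset.card_pos.2 hS
        omega
      · intro a ha b hb
        rw [Finset.mem_sdiff, Finset.mem_insert] at ha
        push_neg at ha
        rcases Finset.mem_insert.1 hb with rfl | hbB'
        · exact hmax a ha.1
        · exact hB'max a (Finset.mem_sdiff.2 ⟨Finset.mem_erase.2 ⟨ha.2.1, ha.1⟩, ha.2.2⟩) b hbB'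

lemma grad_bound {M N : ℕ} (Φ : Matrix (Fin M) (Fin N ⊕ Fin N) ℝ) (lam : ℝ) (hlam : 0 ≤ lam)
    (xh : Fin N ⊕ Fin N → ℝ) (y : Fin M → ℝ)
    (hmin : ∀ u : Fin N ⊕ Fin N → ℝ,
      1 / 2 * l2 (Φ.mulVec xh - y) ^ 2 + lam * n21 xh ≤
        1 / 2 * l2 (Φ.mulVec u - y) ^ 2 + lam * n21 u)
    (i : Fin N) : jmag (Φ.transpose.mulVec (Φ.mulVec xh - y)) i ≤ lam := by
  set r : Fin N ⊕ Fin N → ℝ := Φ.transpose.mulVec (Φ.mulVec xh - y) with hr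
  set a : ℝ := r (Sum.inl i) with ha
  set b : ℝ := r (Sum.inr i) with hb
  set m : ℝ := jmag r i with hmdef
  rcases eq_or_lt_of_le (jmag_nonneg r i) with hm0 | hm
  · have : m = 0 := hmdef.trans hm0.symm
    rw [this]; exact hlam
  have hm2 : m ^ 2 = a ^ 2 + b ^ 2 := jmag_sq r i
  have hmne : m ≠ 0 := ne_of_gt hm
  set e : Fin N ⊕ Fin N → ℝ := Sum.elim (fun k => if k = i then -(a / m) else 0)
    (fun k => if k = i then -(b / m) else 0) with he
  have he_inl : ∀ k, e (Sum.inl k) = if k = i then -(a / m) else 0 := fun k => rfl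
  have he_inr : ∀ k, e (Sum.inr k) = if k = i then -(b / m) else 0 := fun k => rfl
  have her : dot e r = -m := by
    have : dot e r = (-(a / m)) * a + (-(b / m)) * b := by
      unfold dot
      rw [Fintype.sum_sum_type]
      have s1 : (∑ k : Fin N, e (Sum.inl k) * r (Sum.inl k)) = (-(a / m)) * a := by
        rw [Finset.sum_congr rfl fun k _ => by
          rw [he_inl k, ite_mul, zero_mul]]
        rw [Finset.sum_ite_eq' Finset.univ i (fun k => -(a/m) * r (Sum.inl k))]
        simp [ha]
      have s2 : (∑ k : Fin N, e (Sum.inr k) * r (Sum.inr k)) = (-(b / m)) * b := by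
        rw [Finset.sum_congr rfl fun k _ => by
          rw [he_inr k, ite_mul, zero_mul]]
        rw [Finset.sum_ite_eq' Finset.univ i (fun k => -(b/m) * r (Sum.inr k))]
        simp [hb]
      rw [s1, s2]
    rw [this]
    field_simp
    nlinarith [hm2]
  have hjme : jmag e i = 1 := by
    unfold jmag
    rw [he_inl i, he_inr i, if_pos rfl, if_pos rfl]
    have : (-(a / m)) ^ 2 + (-(b / m)) ^ 2 = 1 := by
      field_simp
      nlinarith [hm2]
    rw [this, Real.sqrt_one]
  -- key inequality for every t > 0
  have key : ∀ t : ℝ, 0 < t → m ≤ lam + t * (dot (Φ.mulVec e) (Φ.mulVec e)) / 2 := by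
    intro t ht
    set B := Φ.mulVec e with hB
    set A := Φ.mulVec xh - y with hA
    have hAB : Φ.mulVec (xh + t • e) - y = A + t • B := by
      rw [Matrix.mulVec_add, Matrix.mulVec_smul]
      funext j; simp [hA, hB]; ring
    have hexp : l2 (A + t • B) ^ 2 = l2 A ^ 2 + 2 * t * dot B A + t ^ 2 * dot B B := by
      rw [← dot_self, ← dot_self, dot_add_left, dot_add_right, dot_add_right,
        dot_smul_left, dot_smul_right, dot_smul_left, dot_smul_right, dot_comm A B]
      ring
    have hBA : dot B A = -m := by
      rw [hB, dot_mulVec_adj]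
      exact her
    have hn21 : n21 (xh + t • e) ≤ n21 xh + t := by
      unfold n21
      rw [← Finset.sum_erase_add Finset.univ _ (Finset.mem_univ i),
        ← Finset.sum_erase_add Finset.univ (fun k => jmag xh k) (Finset.mem_univ i)]
      have hcong : ∀ k ∈ Finset.univ.erase i, jmag (xh + t • e) k = jmag xh k := by
        intro k hk
        have hki : k ≠ i := (Finset.mem_erase.1 hk).1
        unfold jmag
        have e1 : (xh + t • e) (Sum.inl k) = xh (Sum.inl k) := by
          simp [he_inl k, hki]
        have e2 : (xh + t • e) (Sum.inr k) = xh (Sum.inr k) := by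
          simp [he_inr k, hki]
        rw [e1, e2]
      rw [Finset.sum_congr rfl hcong]
      have : jmag (xh + t • e) i ≤ jmag xh i + t := by
        calc jmag (xh + t • e) i ≤ jmag xh i + jmag (t • e) i := jmag_add_le _ _ _
          _ = jmag xh i + t := by rw [jmag_smul, hjme, abs_of_pos ht, mul_one]
      linarith
    have hmin' := hmin (xh + t • e)
    rw [hAB, hexp] at hmin'
    have hC : 0 ≤ dot B B := by rw [dot_self]; positivity
    have step : lam * n21 xh + t * m ≤ t ^ 2 * dot B B / 2 + lam * (n21 xh + t) := by
      have := mul_le_mul_of_nonneg_left hn21 hlam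
      nlinarith [hmin', hBA]
    have : t * m ≤ t ^ 2 * dot B B / 2 + lam * t := by linarith
    have h2 : t * m ≤ t * (lam + t * dot B B / 2) := by nlinarith [this]
    exact le_of_mul_le_mul_left h2 ht
  set C := dot (Φ.mulVec e) (Φ.mulVec e) with hCdef
  have hC : 0 ≤ C := by rw [hCdef, dot_self]; positivity
  apply le_of_forall_pos_le_add
  intro ε hε
  have ht : 0 < ε / (C + 1) := by positivity
  have := key (ε / (C + 1)) ht
  have hfrac : (ε / (C + 1)) * C / 2 ≤ ε := by
    have h1 : (ε / (C + 1)) * (C + 1) = ε := by field_simp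
    nlinarith [ht.le, hC]
  linarith

set_option maxHeartbeats 2000000 in
theorem stmt9 {M N K : ℕ} (hK : 0 < K) (Φ : Matrix (Fin M) (Fin N ⊕ Fin N) ℝ)
    (σ lam : ℝ) (hσ0 : 0 ≤ σ) (hσ : σ < 0.1907) (hRIP : JRIP Φ (2 * K) σ)
    (x xh : Fin N ⊕ Fin N → ℝ) (w : Fin M → ℝ) (y : Fin M → ℝ)
    (hy : y = Φ.mulVec x + w)
    (hw : ninf1 (Φ.transpose.mulVec w) ≤ lam / 2)
    (hmin : ∀ u : Fin N ⊕ Fin N → ℝ,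
      1 / 2 * l2 (Φ.mulVec xh - y) ^ 2 + lam * n21 xh ≤
        1 / 2 * l2 (Φ.mulVec u - y) ^ 2 + lam * n21 u)
    (T : Finset (Fin N)) (hTcard : T.card = K)
    (hTbig : ∀ i ∈ T, ∀ j ∉ T, jmag x j ≤ jmag x i)
    (T1 : Finset (Fin N)) (hT1sub : T1 ⊆ Tᶜ) (hT1card : T1.card = K)
    (hT1big : ∀ i ∈ T1, ∀ j ∈ Tᶜ \ T1, jmag (xh - x) j ≤ jmag (xh - x) i) :
    l2 (rT (T ∪ T1) (xh - x)) ≤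
      (Real.sqrt K * lam * (3 * Real.sqrt 2 / 2) +
        Real.sqrt 2 * (1 / Real.sqrt K) * σ * n21 (rT Tᶜ (xh - x))) / (1 - σ) := by
  set h : Fin N ⊕ Fin N → ℝ := xh - x with hh
  set g : Fin N → ℝ := jmag h with hg
  have hgnonneg : ∀ i, 0 ≤ g i := fun i => jmag_nonneg h i
  have hlam0 : 0 ≤ lam := by
    have h0 : (0:ℝ) ≤ ninf1 (Φ.transpose.mulVec w) :=
      Real.iSup_nonneg (fun i => jmag_nonneg _ i)
    linarith
  have h1σ : 0 < 1 - σ := by norm_num at hσ ⊢; linarith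
  have hKR : (0:ℝ) < (K:ℝ) := by exact_mod_cast hK
  have hsK : 0 < Real.sqrt K := Real.sqrt_pos.2 hKR
  have hdTT1 : Disjoint T T1 := Finset.disjoint_right.2 fun a ha =>
    Finset.mem_compl.1 (hT1sub ha)
  set T01 : Finset (Fin N) := T ∪ T1 with hT01
  have hT01card : T01.card ≤ 2 * K := by
    calc T01.card ≤ T.card + T1.card := Finset.card_union_le _ _
      _ = 2 * K := by rw [hTcard, hT1card]; ring
  set h01 : Fin N ⊕ Fin N → ℝ := rT T01 h with hh01
  set A : ℝ := l2 h01 with hA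
  have hA0 : 0 ≤ A := l2_nonneg _
  -- gradient bound
  have hgb : ∀ i, jmag (Φ.transpose.mulVec (Φ.mulVec h)) i ≤ 3 / 2 * lam := by
    intro i
    have h1 := grad_bound Φ lam hlam0 xh y hmin i
    have hw' : jmag (Φ.transpose.mulVec w) i ≤ lam / 2 :=
      le_trans (le_ciSup (Finite.bddAbove_range _) i) hw
    have hPhih : Φ.mulVec h = (Φ.mulVec xh - y) + w := by
      rw [hh, Matrix.mulVec_sub, hy]
      funext j; simp; ring
    have hdec : Φ.transpose.mulVec (Φ.mulVec h)
        = Φ.transpose.mulVec (Φ.mulVec xh - y) + Φ.transpose.mulVec w := by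
      rw [hPhih, Matrix.mulVec_add]
    calc jmag (Φ.transpose.mulVec (Φ.mulVec h)) i
        ≤ jmag (Φ.transpose.mulVec (Φ.mulVec xh - y)) i + jmag (Φ.transpose.mulVec w) i := by
          rw [hdec]; exact jmag_add_le _ _ i
      _ ≤ lam + lam / 2 := add_le_add h1 hw'
      _ = 3 / 2 * lam := by ring
  -- step B
  have hBstep : dot (Φ.mulVec h) (Φ.mulVec h01) ≤ 3 / 2 * lam * n21 h01 := by
    rw [dot_comm, dot_mulVec_adj]
    set z := Φ.transpose.mulVec (Φ.mulVec h) with hz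
    calc dot h01 z = ∑ i, (h01 (Sum.inl i) * z (Sum.inl i) + h01 (Sum.inr i) * z (Sum.inr i)) := by
          unfold dot; rw [Fintype.sum_sum_type, ← Finset.sum_add_distrib]
      _ ≤ ∑ i, jmag h01 i * jmag z i := Finset.sum_le_sum fun i _ => pair_cauchy _ _ i
      _ ≤ ∑ i, jmag h01 i * (3 / 2 * lam) := Finset.sum_le_sum fun i _ =>
          mul_le_mul_of_nonneg_left (hgb i) (jmag_nonneg _ i)
      _ = 3 / 2 * lam * n21 h01 := by rw [← Finset.sum_mul]; unfold n21; ring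
  have hn21l2 : n21 h01 ≤ Real.sqrt (2 * (K:ℝ)) * A := by
    have h1 : n21 h01 = ∑ i ∈ T01, g i := n21_rT _ _
    have h2 : (∑ i ∈ T01, g i) ^ 2 ≤ (T01.card : ℝ) * ∑ i ∈ T01, g i ^ 2 := by
      exact sq_sum_le_card_mul_sum_sq
    have h3 : A ^ 2 = ∑ i ∈ T01, g i ^ 2 := l2_rT_sq _ _
    have hsumsq : (0:ℝ) ≤ ∑ i ∈ T01, g i ^ 2 := Finset.sum_nonneg fun i _ => sq_nonneg _
    have hcard : (T01.card : ℝ) ≤ 2 * (K:ℝ) := by exact_mod_cast hT01card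
    have h4 : n21 h01 ^ 2 ≤ (2 * (K:ℝ)) * A ^ 2 := by
      rw [h1, h3]
      calc (∑ i ∈ T01, g i) ^ 2 ≤ (T01.card : ℝ) * ∑ i ∈ T01, g i ^ 2 := h2
        _ ≤ (2 * (K:ℝ)) * ∑ i ∈ T01, g i ^ 2 := mul_le_mul_of_nonneg_right hcard hsumsq
    have hn0 : 0 ≤ n21 h01 := by rw [h1]; exact Finset.sum_nonneg fun i _ => hgnonneg i
    calc n21 h01 = Real.sqrt (n21 h01 ^ 2) := (Real.sqrt_sq hn0).symm
      _ ≤ Real.sqrt ((2 * (K:ℝ)) * A ^ 2) := Real.sqrt_le_sqrt h4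
      _ = Real.sqrt (2 * (K:ℝ)) * A := by
          rw [Real.sqrt_mul (by positivity), Real.sqrt_sq hA0]
  -- block bound
  set D : ℝ := σ * Real.sqrt 2 * A with hD
  have hD0 : 0 ≤ D := by positivity
  have hl2sum : l2 (rT T h) + l2 (rT T1 h) ≤ Real.sqrt 2 * A := by
    set p := l2 (rT T h) with hp
    set q := l2 (rT T1 h) with hq
    have hp0 : 0 ≤ p := l2_nonneg _
    have hq0 : 0 ≤ q := l2_nonneg _
    have hpqs : p ^ 2 + q ^ 2 = A ^ 2 := by
      rw [hp, hq, hA, hh01, l2_rT_sq, l2_rT_sq, l2_rT_sq, hT01,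
        Finset.sum_union hdTT1]
    have hsq : (p + q) ^ 2 ≤ (Real.sqrt 2 * A) ^ 2 := by
      have h2 : (Real.sqrt 2) ^ 2 = 2 := Real.sq_sqrt (by norm_num)
      nlinarith [sq_nonneg (p - q)]
    calc p + q = Real.sqrt ((p + q) ^ 2) := (Real.sqrt_sq (by positivity)).symm
      _ ≤ Real.sqrt ((Real.sqrt 2 * A) ^ 2) := Real.sqrt_le_sqrt hsq
      _ = Real.sqrt 2 * A := Real.sqrt_sq (by positivity)
  have blk : ∀ B : Finset (Fin N), B ⊆ Tᶜ \ T1 → B.card ≤ K →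
      |dot (Φ.mulVec (rT B h)) (Φ.mulVec h01)| ≤ D * l2 (rT B h) := by
    intro B hBsub hBcard
    have hsplit : h01 = rT T h + rT T1 h := by
      rw [hh01, hT01, rT_union T T1 hdTT1]
    have hBT : Disjoint B T := Finset.disjoint_left.2 fun a ha =>
      Finset.mem_compl.1 (Finset.mem_sdiff.1 (hBsub ha)).1
    have hBT1 : Disjoint B T1 := Finset.disjoint_left.2 fun a ha =>
      (Finset.mem_sdiff.1 (hBsub ha)).2
    have c1 : (jsupp (rT B h)).card + (jsupp (rT T h)).card ≤ 2 * K := by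
      have := Finset.card_le_card (jsupp_rT B h)
      have := Finset.card_le_card (jsupp_rT T h)
      omega
    have c2 : (jsupp (rT B h)).card + (jsupp (rT T1 h)).card ≤ 2 * K := by
      have := Finset.card_le_card (jsupp_rT B h)
      have := Finset.card_le_card (jsupp_rT T1 h)
      omega
    have d1 : Disjoint (jsupp (rT B h)) (jsupp (rT T h)) :=
      Finset.disjoint_of_subset_left (jsupp_rT _ _)
        (Finset.disjoint_of_subset_right (jsupp_rT _ _) hBT)
    have d2 : Disjoint (jsupp (rT B h)) (jsupp (rT T1 h)) :=
      Finset.disjoint_of_subset_left (jsupp_rT _ _)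
        (Finset.disjoint_of_subset_right (jsupp_rT _ _) hBT1)
    have p1 := polAbs hσ0 hRIP d1 c1
    have p2 := polAbs hσ0 hRIP d2 c2
    have hdd : dot (Φ.mulVec (rT B h)) (Φ.mulVec h01)
        = dot (Φ.mulVec (rT B h)) (Φ.mulVec (rT T h))
          + dot (Φ.mulVec (rT B h)) (Φ.mulVec (rT T1 h)) := by
      rw [hsplit, Matrix.mulVec_add, dot_add_right]
    calc |dot (Φ.mulVec (rT B h)) (Φ.mulVec h01)|
        ≤ |dot (Φ.mulVec (rT B h)) (Φ.mulVec (rT T h))|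
          + |dot (Φ.mulVec (rT B h)) (Φ.mulVec (rT T1 h))| := by
          rw [hdd]; exact abs_add_le _ _
      _ ≤ σ * l2 (rT B h) * l2 (rT T h) + σ * l2 (rT B h) * l2 (rT T1 h) := add_le_add p1 p2
      _ = σ * l2 (rT B h) * (l2 (rT T h) + l2 (rT T1 h)) := by ring
      _ ≤ σ * l2 (rT B h) * (Real.sqrt 2 * A) := by
          apply mul_le_mul_of_nonneg_left hl2sum
          exact mul_nonneg hσ0 (l2_nonneg _)
      _ = D * l2 (rT B h) := by rw [hD]; ring
  -- shelling
  have shell : ∀ n : ℕ, ∀ S : Finset (Fin N), S.card ≤ n → S ⊆ Tᶜ \ T1 → ∀ c : ℝ, 0 ≤ c →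
      (∀ a ∈ S, g a ≤ c) →
      |dot (Φ.mulVec (rT S h)) (Φ.mulVec h01)|
        ≤ D * (Real.sqrt K * c + (1 / Real.sqrt K) * ∑ i ∈ S, g i) := by
    intro n
    induction n with
    | zero =>
      intro S hScard _ c hc _
      have hSe : S = ∅ := Finset.card_eq_zero.1 (Nat.le_zero.1 hScard)
      have hrT : rT S h = 0 := by
        funext j; simp [rT, hSe]
      rw [hrT]
      have : dot (Φ.mulVec (0 : Fin N ⊕ Fin N → ℝ)) (Φ.mulVec h01) = 0 := by
        rw [Matrix.mulVec_zero]; simp [dot]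
      rw [this, abs_zero, hSe]
      simp only [Finset.sum_empty, mul_zero, add_zero]
      positivity
    | succ n ih =>
      intro S hScard hSsub c hc hbound
      obtain ⟨B, hBsub, hBcard, hBmax⟩ := topk g K S
      have hBK : B.card ≤ K := hBcard ▸ min_le_left _ _
      have hsplitS : rT S h = rT B h + rT (S \ B) h := by
        rw [← rT_union B (S \ B) Finset.disjoint_sdiff, Finset.union_sdiff_of_subset hBsub]
      have hdod : dot (Φ.mulVec (rT S h)) (Φ.mulVec h01)
          = dot (Φ.mulVec (rT B h)) (Φ.mulVec h01)
            + dot (Φ.mulVec (rT (S \ B) h)) (Φ.mulVec h01) := by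
        rw [hsplitS, Matrix.mulVec_add, dot_add_left]
      have hblkB := blk B (hBsub.trans hSsub) hBK
      have hl2B : l2 (rT B h) ≤ Real.sqrt K * c := by
        have h1 : l2 (rT B h) ^ 2 ≤ (Real.sqrt K * c) ^ 2 := by
          rw [l2_rT_sq]
          have hKK : (Real.sqrt K * c) ^ 2 = (K:ℝ) * c ^ 2 := by
            rw [mul_pow, Real.sq_sqrt (le_of_lt hKR)]
          rw [hKK]
          calc ∑ i ∈ B, g i ^ 2 ≤ ∑ _i ∈ B, c ^ 2 := Finset.sum_le_sum fun i hi => by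
                have := hbound i (hBsub hi)
                nlinarith [hgnonneg i]
            _ = (B.card : ℝ) * c ^ 2 := by rw [Finset.sum_const]; simp [nsmul_eq_mul]
            _ ≤ (K:ℝ) * c ^ 2 := by
                apply mul_le_mul_of_nonneg_right _ (sq_nonneg c)
                exact_mod_cast hBK
        calc l2 (rT B h) = Real.sqrt (l2 (rT B h) ^ 2) := (Real.sqrt_sq (l2_nonneg _)).symm
          _ ≤ Real.sqrt ((Real.sqrt K * c) ^ 2) := Real.sqrt_le_sqrt h1
          _ = Real.sqrt K * c := Real.sqrt_sq (by positivity)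
      have hgS : (0:ℝ) ≤ ∑ i ∈ S \ B, g i := Finset.sum_nonneg fun i _ => hgnonneg i
      have hgB : (0:ℝ) ≤ ∑ i ∈ B, g i := Finset.sum_nonneg fun i _ => hgnonneg i
      rcases (S \ B).eq_empty_or_nonempty with hempty | hne
      · have hrT : rT (S \ B) h = 0 := by funext j; simp [rT, hempty]
        have hz : dot (Φ.mulVec (rT (S \ B) h)) (Φ.mulVec h01) = 0 := by
          rw [hrT, Matrix.mulVec_zero]; simp [dot]
        rw [hdod, hz, add_zero]
        calc |dot (Φ.mulVec (rT B h)) (Φ.mulVec h01)| ≤ D * l2 (rT B h) := hblkB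
          _ ≤ D * (Real.sqrt K * c) := mul_le_mul_of_nonneg_left hl2B hD0
          _ ≤ D * (Real.sqrt K * c + (1 / Real.sqrt K) * ∑ i ∈ S, g i) := by
              apply mul_le_mul_of_nonneg_left _ hD0
              have : (0:ℝ) ≤ (1 / Real.sqrt K) * ∑ i ∈ S, g i := by
                apply mul_nonneg (by positivity)
                exact Finset.sum_nonneg fun i _ => hgnonneg i
              linarith
      · have hBcardK : B.card = K := by
          rcases le_or_gt K S.card with hle | hlt
          · rw [hBcard, min_eq_left hle]
          · exfalso
            have hBS : B.card = S.card := by rw [hBcard, min_eq_right hlt.le]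
            have : B = S := Finset.eq_of_subset_of_card_le hBsub (le_of_eq hBS.symm)
            rw [this] at hne
            simp at hne
        set c' : ℝ := (∑ b ∈ B, g b) / K with hc'def
        have hc' : 0 ≤ c' := div_nonneg hgB (le_of_lt hKR)
        have hbound' : ∀ a ∈ S \ B, g a ≤ c' := by
          intro a ha
          have hKg : (K:ℝ) * g a ≤ ∑ b ∈ B, g b := by
            calc (K:ℝ) * g a = ∑ _b ∈ B, g a := by
                  rw [Finset.sum_const, hBcardK]; simp [nsmul_eq_mul]
              _ ≤ ∑ b ∈ B, g b := Finset.sum_le_sum fun b hb => hBmax a ha b hb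
          rw [hc'def, le_div_iff₀ hKR]
          linarith
        have hcards : (S \ B).card ≤ n := by
          have hsd := Finset.card_sdiff_of_subset hBsub
          omega
        have hih := ih (S \ B) hcards ((Finset.sdiff_subset).trans hSsub) c' hc' hbound'
        have hsk : Real.sqrt K * c' = (1 / Real.sqrt K) * ∑ b ∈ B, g b := by
          have hss : Real.sqrt K * Real.sqrt K = (K:ℝ) := Real.mul_self_sqrt (le_of_lt hKR)
          rw [hc'def]
          rw [div_eq_iff (ne_of_gt hKR)] at *
          field_simp
          linear_combination (∑ b ∈ B, g b) * hss
        have hsumsplit : (∑ i ∈ S \ B, g i) + ∑ i ∈ B, g i = ∑ i ∈ S, g i :=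
          Finset.sum_sdiff hBsub
        calc |dot (Φ.mulVec (rT S h)) (Φ.mulVec h01)|
            ≤ |dot (Φ.mulVec (rT B h)) (Φ.mulVec h01)|
              + |dot (Φ.mulVec (rT (S \ B) h)) (Φ.mulVec h01)| := by
              rw [hdod]; exact abs_add_le _ _
          _ ≤ D * (Real.sqrt K * c)
              + D * (Real.sqrt K * c' + (1 / Real.sqrt K) * ∑ i ∈ S \ B, g i) :=
              add_le_add (hblkB.trans (mul_le_mul_of_nonneg_left hl2B hD0)) hih
          _ = D * (Real.sqrt K * c
              + (1 / Real.sqrt K) * ((∑ i ∈ S \ B, g i) + ∑ i ∈ B, g i)) := by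
              rw [hsk]; ring
          _ = D * (Real.sqrt K * c + (1 / Real.sqrt K) * ∑ i ∈ S, g i) := by
              rw [hsumsplit]
  -- apply shelling
  set R : Finset (Fin N) := Tᶜ \ T1 with hRdef
  have hgT1 : (0:ℝ) ≤ ∑ b ∈ T1, g b := Finset.sum_nonneg fun i _ => hgnonneg i
  set c0 : ℝ := (∑ b ∈ T1, g b) / K with hc0
  have hc00 : 0 ≤ c0 := div_nonneg hgT1 (le_of_lt hKR)
  have hboundR : ∀ a ∈ R, g a ≤ c0 := by
    intro a ha
    have hKg : (K:ℝ) * g a ≤ ∑ b ∈ T1, g b := by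
      calc (K:ℝ) * g a = ∑ _b ∈ T1, g a := by
            rw [Finset.sum_const, hT1card]; simp [nsmul_eq_mul]
        _ ≤ ∑ b ∈ T1, g b := Finset.sum_le_sum fun b hb => hT1big b hb a ha
    rw [hc0, le_div_iff₀ hKR]
    linarith
  have hcross := shell R.card R le_rfl Finset.Subset.rfl c0 hc00 hboundR
  have hss : Real.sqrt K * Real.sqrt K = (K:ℝ) := Real.mul_self_sqrt (le_of_lt hKR)
  have hsk : Real.sqrt K * c0 = (1 / Real.sqrt K) * ∑ b ∈ T1, g b := by
    rw [hc0]
    field_simp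
    linear_combination (∑ b ∈ T1, g b) * hss
  have hsum : (∑ i ∈ R, g i) + ∑ b ∈ T1, g b = ∑ i ∈ Tᶜ, g i := Finset.sum_sdiff hT1sub
  have hn21Tc : n21 (rT Tᶜ h) = ∑ i ∈ Tᶜ, g i := n21_rT _ _
  have hcross' : |dot (Φ.mulVec (rT R h)) (Φ.mulVec h01)|
      ≤ D * (1 / Real.sqrt K) * n21 (rT Tᶜ h) := by
    calc |dot (Φ.mulVec (rT R h)) (Φ.mulVec h01)|
        ≤ D * (Real.sqrt K * c0 + (1 / Real.sqrt K) * ∑ i ∈ R, g i) := hcross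
      _ = D * (1 / Real.sqrt K) * ((∑ i ∈ R, g i) + ∑ b ∈ T1, g b) := by rw [hsk]; ring
      _ = D * (1 / Real.sqrt K) * n21 (rT Tᶜ h) := by rw [hsum, hn21Tc]
  have hcompl : T01ᶜ = R := by
    ext i
    simp only [hT01, hRdef, Finset.mem_compl, Finset.mem_union, Finset.mem_sdiff, not_or]
  have hdecomp : h = h01 + rT R h := by
    rw [hh01, ← hcompl]
    exact (rT_compl_add T01 h).symm
  have hsplitdot : dot (Φ.mulVec h) (Φ.mulVec h01)
      = l2 (Φ.mulVec h01) ^ 2 + dot (Φ.mulVec (rT R h)) (Φ.mulVec h01) := by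
    conv_lhs => rw [hdecomp]
    rw [Matrix.mulVec_add, dot_add_left, dot_self]
  have hsupp : (jsupp h01).card ≤ 2 * K :=
    le_trans (Finset.card_le_card (jsupp_rT _ _)) hT01card
  have hlow := (hRIP h01 hsupp).1
  set E : ℝ := Real.sqrt K * lam * (3 * Real.sqrt 2 / 2)
      + Real.sqrt 2 * (1 / Real.sqrt K) * σ * n21 (rT Tᶜ h) with hE
  have hn21Tc0 : 0 ≤ n21 (rT Tᶜ h) := by
    rw [hn21Tc]; exact Finset.sum_nonneg fun i _ => hgnonneg i
  have hEA : (1 - σ) * A ^ 2 ≤ E * A := by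
    have t1 : 3 / 2 * lam * n21 h01 ≤ 3 / 2 * lam * (Real.sqrt (2 * (K:ℝ)) * A) :=
      mul_le_mul_of_nonneg_left hn21l2 (by linarith)
    have hs2K : Real.sqrt (2 * (K:ℝ)) = Real.sqrt 2 * Real.sqrt K :=
      Real.sqrt_mul (by norm_num) _
    have habs := (abs_le.1 hcross').1
    calc (1 - σ) * A ^ 2 ≤ l2 (Φ.mulVec h01) ^ 2 := hlow
      _ = dot (Φ.mulVec h) (Φ.mulVec h01) - dot (Φ.mulVec (rT R h)) (Φ.mulVec h01) := by
          rw [hsplitdot]; ring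
      _ ≤ 3 / 2 * lam * n21 h01 + D * (1 / Real.sqrt K) * n21 (rT Tᶜ h) := by
          linarith [hBstep]
      _ ≤ 3 / 2 * lam * (Real.sqrt (2 * (K:ℝ)) * A)
          + D * (1 / Real.sqrt K) * n21 (rT Tᶜ h) := by linarith
      _ = E * A := by rw [hE, hs2K, hD]; ring
  have hE0 : 0 ≤ E := by
    rw [hE]
    apply add_nonneg
    · apply mul_nonneg (mul_nonneg (Real.sqrt_nonneg _) hlam0)
      positivity
    · exact mul_nonneg (mul_nonneg (mul_nonneg (Real.sqrt_nonneg _) (by positivity)) hσ0)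
        hn21Tc0
  rw [le_div_iff₀ h1σ]
  rcases eq_or_lt_of_le hA0 with hA0' | hApos
  · rw [← hA0', zero_mul]
    exact hE0
  · have h1 : ((1 - σ) * A) * A ≤ E * A := by nlinarith [hEA]
    have h2 : (1 - σ) * A ≤ E := le_of_mul_le_mul_right h1 hApos
    nlinarith [h2]
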